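/- Let n, r ≥ 0 and s ≥ 1 be integers. For each j with 0 ≤ j ≤ s−1, the boundary quadrature weight λ_{n+1}^{(j)} attached to the j-th derivative at the right endpoint b is strictly positive: λ_{n+1}^{(j)} > 0. -/

import Mathlib

open MeasureTheory

/-- The generalized Gauss–Radau/Gauss–Lobatto quadrature
`Q_{n,r,s}(f) = Σ_{j<r} λ₀^{(j)} f^{(j)}(a) + Σ_{j<n} λ_j f(τ_j) + Σ_{j<s} (-1)^j λ_{n+1}^{(j)} f^{(j)}(b)`,
where derivatives are taken within `[a,b]`. -/
noncomputable def quad (a b : ℝ) (n r s : ℕ) (τ w0 wi w1 : ℕ → ℝ) (f : ℝ → ℝ) : ℝ :=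
  (∑ j ∈ Finset.range r, w0 j * iteratedDerivWithin j f (Set.Icc a b) a)
  + (∑ j ∈ Finset.range n, wi j * f (τ j))
  + (∑ j ∈ Finset.range s, (-1 : ℝ) ^ j * w1 j * iteratedDerivWithin j f (Set.Icc a b) b)

open Polynomial

lemma trunc_coeff (c : ℕ → ℝ) (m i : ℕ) :
    (∑ k ∈ Finset.range (m+1), C (c k) * X ^ k).coeff i = if i ≤ m then c i else 0 := by
  rw [Polynomial.finset_sum_coeff]
  simp only [Polynomial.coeff_C_mul, Polynomial.coeff_X_pow, mul_ite, mul_one, mul_zero]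
  rw [Finset.sum_ite_eq (Finset.range (m+1)) i c]
  simp [Nat.lt_succ_iff]

lemma coeff_mul_delta {A B : Polynomial ℝ} {k : ℕ}
    (hA : ∀ i ≤ k, A.coeff i = if i = 0 then 1 else 0) :
    (A * B).coeff k = B.coeff k := by
  rw [Polynomial.coeff_mul]
  rw [Finset.sum_eq_single (0, k)]
  · rw [hA 0 (Nat.zero_le _)]; simp
  · rintro ⟨i, i'⟩ hmem hne
    rw [Finset.HasAntidiagonal.mem_antidiagonal] at hmem
    have hik : i ≤ k := hmem ▸ Nat.le_add_right i i'
    have : i ≠ 0 := by rintro rfl; exact hne (by simp [← hmem])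
    rw [hA i hik, if_neg this, zero_mul]
  · intro h; exact absurd (Finset.HasAntidiagonal.mem_antidiagonal.2 (by simp)) h

/-- `InvP m G`: there is a nonneg-coefficient polynomial `R` of degree ≤ m which inverts `G`
modulo `X^(m+1)`. -/
def InvP (m : ℕ) (G : Polynomial ℝ) : Prop :=
  ∃ R : Polynomial ℝ, R.natDegree ≤ m ∧ (∀ k, 0 ≤ R.coeff k) ∧
    (∀ k ≤ m, (R * G).coeff k = if k = 0 then 1 else 0)

lemma invp_one (m : ℕ) : InvP m 1 := by
  refine ⟨1, by simp, fun k => ?_, fun k _ => by rw [mul_one, Polynomial.coeff_one]⟩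
  rw [Polynomial.coeff_one]
  split <;> norm_num

lemma invp_single {β : ℝ} (hβ : 0 < β) (m : ℕ) : InvP m (C β - X) := by
  refine ⟨∑ k ∈ Finset.range (m+1), C (β⁻¹ ^ (k+1)) * X ^ k, ?_, ?_, ?_⟩
  · rw [Polynomial.natDegree_le_iff_coeff_eq_zero]
    intro N hN
    rw [trunc_coeff, if_neg (by omega)]
  · intro k
    rw [trunc_coeff]
    split
    · positivity
    · exact le_rfl
  · intro k hk
    have hcoeff : ∀ i, (∑ k ∈ Finset.range (m+1), C (β⁻¹ ^ (k+1)) * X ^ k).coeff i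
        = if i ≤ m then β⁻¹ ^ (i+1) else 0 := fun i => trunc_coeff _ m i
    set R := ∑ k ∈ Finset.range (m+1), C (β⁻¹ ^ (k+1)) * X ^ k with hR
    have h1 : R * (C β - X) = R * C β - R * X := by ring
    rw [h1]
    cases k with
    | zero =>
      rw [Polynomial.coeff_sub, Polynomial.coeff_mul_C, Polynomial.mul_coeff_zero,
        Polynomial.coeff_X_zero, mul_zero, hcoeff 0, if_pos (Nat.zero_le m)]
      simp [inv_mul_cancel₀ (ne_of_gt hβ)]
    | succ k' =>
      rw [Polynomial.coeff_sub, Polynomial.coeff_mul_C, Polynomial.coeff_mul_X,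
        hcoeff (k'+1), hcoeff k', if_pos hk, if_pos (by omega), if_neg (by omega)]
      field_simp
      rw [pow_succ (1 / β) (k' + 1), mul_comm β, mul_assoc, one_div, inv_mul_cancel₀ (ne_of_gt hβ)]
      ring

lemma invp_mul {m : ℕ} {G₁ G₂ : Polynomial ℝ} (h₁ : InvP m G₁) (h₂ : InvP m G₂) :
    InvP m (G₁ * G₂) := by
  obtain ⟨R₁, hd₁, hn₁, hc₁⟩ := h₁
  obtain ⟨R₂, hd₂, hn₂, hc₂⟩ := h₂
  refine ⟨∑ k ∈ Finset.range (m+1), C ((R₁ * R₂).coeff k) * X ^ k, ?_, ?_, ?_⟩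
  · rw [Polynomial.natDegree_le_iff_coeff_eq_zero]
    intro N hN
    rw [trunc_coeff, if_neg (by omega)]
  · intro k
    rw [trunc_coeff]
    split
    · rw [Polynomial.coeff_mul]
      exact Finset.sum_nonneg fun i _ => mul_nonneg (hn₁ _) (hn₂ _)
    · exact le_rfl
  · intro k hk
    have key : (((∑ k ∈ Finset.range (m+1), C ((R₁ * R₂).coeff k) * X ^ k)) * (G₁ * G₂)).coeff k
        = ((R₁ * R₂) * (G₁ * G₂)).coeff k := by
      rw [Polynomial.coeff_mul, Polynomial.coeff_mul]
      refine Finset.sum_congr rfl ?_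
      rintro ⟨i, i'⟩ hmem
      rw [Finset.HasAntidiagonal.mem_antidiagonal] at hmem
      have : i ≤ m := le_trans (hmem ▸ Nat.le_add_right i i') hk
      rw [trunc_coeff, if_pos this]
    rw [key, mul_mul_mul_comm]
    rw [coeff_mul_delta (fun i hik => hc₁ i (le_trans hik hk))]
    exact hc₂ k hk

lemma invp_pow {m : ℕ} {G : Polynomial ℝ} (h : InvP m G) (e : ℕ) : InvP m (G ^ e) := by
  induction e with
  | zero => simpa using invp_one m
  | succ e ih => rw [pow_succ]; exact invp_mul ih h

lemma invp_prod {m : ℕ} {ι : Type*} (s : Finset ι) (f : ι → Polynomial ℝ)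
    (h : ∀ i ∈ s, InvP m (f i)) : InvP m (∏ i ∈ s, f i) :=
  Finset.prod_induction f (InvP m) (fun _ _ => invp_mul) (invp_one m) h

lemma iter_deriv_shift (c : ℝ) (p : Polynomial ℝ) (k : ℕ) :
    Polynomial.derivative^[k] (p.comp (X + C c)) =
      (Polynomial.derivative^[k] p).comp (X + C c) := by
  induction k with
  | zero => rfl
  | succ k ih =>
    rw [Function.iterate_succ_apply', ih, Polynomial.derivative_comp]
    simp only [Polynomial.derivative_add, Polynomial.derivative_X, Polynomial.derivative_C,
      add_zero, one_mul]
    have h2 : Polynomial.derivative ((⇑Polynomial.derivative)^[k] p)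
        = (⇑Polynomial.derivative)^[k] (Polynomial.derivative p) := by
      rw [← Function.iterate_succ_apply' Polynomial.derivative k p,
        Function.iterate_succ_apply]
    rw [h2, Function.iterate_succ_apply]

lemma iter_deriv_reflect (b : ℝ) (q : Polynomial ℝ) (k : ℕ) :
    Polynomial.derivative^[k] (q.comp (C b - X)) =
      C ((-1 : ℝ) ^ k) * ((Polynomial.derivative^[k] q).comp (C b - X)) := by
  induction k with
  | zero => simp
  | succ k ih =>
    rw [Function.iterate_succ_apply', ih, Polynomial.derivative_C_mul,
      Polynomial.derivative_comp, Function.iterate_succ_apply']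
    have : Polynomial.derivative (C b - X) = (- 1 : Polynomial ℝ) := by simp
    rw [this, pow_succ, Polynomial.C_mul]
    have hC : (C (-1 : ℝ)) = (-1 : Polynomial ℝ) := by simp
    rw [hC]
    ring

lemma eval_zero_iter_deriv (q : Polynomial ℝ) (k : ℕ) :
    (Polynomial.derivative^[k] q).eval 0 = (k.factorial : ℝ) * q.coeff k := by
  rw [← Polynomial.coeff_zero_eq_eval_zero, Polynomial.coeff_iterate_derivative]
  simp [Nat.descFactorial_self, nsmul_eq_mul]

lemma eval_iter_deriv_root (c : ℝ) (e k : ℕ) (h : Polynomial ℝ) (hk : k < e) :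
    (Polynomial.derivative^[k] ((C c - X) ^ e * h)).eval c = 0 := by
  have h0 : (Polynomial.derivative^[k] ((C c - X) ^ e * h)).eval c
      = (Polynomial.derivative^[k] (((C c - X) ^ e * h).comp (X + C c))).eval 0 := by
    rw [iter_deriv_shift, Polynomial.eval_comp]
    simp
  rw [h0]
  rw [eval_zero_iter_deriv]
  have hcomp : ((C c - X) ^ e * h).comp (X + C c)
      = C ((-1 : ℝ) ^ e) * (h.comp (X + C c) * X ^ e) := by
    rw [Polynomial.mul_comp, Polynomial.pow_comp, Polynomial.sub_comp]
    simp only [Polynomial.C_comp, Polynomial.X_comp]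
    have : C c - (X + C c) = (-1 : Polynomial ℝ) * X := by ring
    rw [this, mul_pow]
    have : ((-1 : Polynomial ℝ)) ^ e = C ((-1 : ℝ) ^ e) := by
      rw [← Polynomial.C_1, ← Polynomial.C_neg, ← Polynomial.C_pow]
    rw [this]; ring
  rw [hcomp, Polynomial.coeff_C_mul, Polynomial.coeff_mul_X_pow', if_neg (by omega)]
  ring

lemma iterDW {a b : ℝ} (hab : a < b) (p : Polynomial ℝ) (k : ℕ) :
    ∀ x ∈ Set.Icc a b, iteratedDerivWithin k (fun t => p.eval t) (Set.Icc a b) x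
      = (Polynomial.derivative^[k] p).eval x := by
  induction k generalizing p with
  | zero => intro x hx; simp
  | succ k ih =>
    intro x hx
    rw [iteratedDerivWithin_succ]
    rw [derivWithin_congr (fun y hy => ih p y hy) (ih p x hx)]
    rw [(Polynomial.differentiableAt _).derivWithin ((uniqueDiffOn_Icc hab) x hx)]
    rw [Polynomial.deriv, Function.iterate_succ_apply']

/-- the boundary weights `λ_{n+1}^{(j)}`, `0 ≤ j ≤ s-1`, attached to the
derivatives at the right endpoint `b` are strictly positive. -/
theorem right_boundary_weights_pos
    (a b : ℝ) (hab : a < b)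
    (μ : Measure ℝ) [IsFiniteMeasure μ]
    (hsupp : μ (Set.Icc a b)ᶜ = 0)
    (hinf : {x | x ∈ Set.Ioo a b ∧ ∀ ε > 0, 0 < μ (Set.Ioo (x - ε) (x + ε))}.Infinite)
    (n r s : ℕ) (hs : 1 ≤ s)
    (τ w0 wi w1 : ℕ → ℝ)
    (hτab : ∀ j < n, τ j ∈ Set.Ioo a b)
    (hτmono : ∀ i j, i < j → j < n → τ i < τ j)
    (hex : ∀ p : Polynomial ℝ, p.natDegree + 1 ≤ 2 * n + r + s →
      quad a b n r s τ w0 wi w1 (fun t => p.eval t) = ∫ t, p.eval t ∂μ)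
    (j : ℕ) (hj : j ≤ s - 1) :
    0 < w1 j := by
  classical
  set m : ℕ := s - 1 - j with hm
  have hjm : j + m = s - 1 := by omega
  set Pi : Polynomial ℝ := ∏ i ∈ Finset.range n, (C (b - τ i) - X) ^ 2 with hPi
  set G : Polynomial ℝ := (C (b - a) - X) ^ r * Pi with hG
  have hInv : InvP m G := by
    refine invp_mul (invp_pow (invp_single (by linarith) m) r) (invp_prod _ _ ?_)
    intro i hi
    have hti := hτab i (Finset.mem_range.1 hi)
    exact invp_pow (invp_single (by linarith [hti.2]) m) 2
  obtain ⟨R, hRdeg, hRpos, hRG⟩ := hInv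
  set q : Polynomial ℝ := X ^ j * (R * G) with hq
  set p : Polynomial ℝ := q.comp (C b - X) with hp
  -- coefficients of q
  have hqc : ∀ k, q.coeff k = if j ≤ k then (R * G).coeff (k - j) else 0 := by
    intro k
    rw [hq, mul_comm (X ^ j) (R * G), Polynomial.coeff_mul_X_pow']
  have hqj : q.coeff j = 1 := by
    rw [hqc, if_pos le_rfl, Nat.sub_self, hRG 0 (Nat.zero_le m), if_pos rfl]
  have hqk : ∀ k < s, k ≠ j → q.coeff k = 0 := by
    intro k hks hkj
    rw [hqc]
    rcases le_or_gt j k with h | h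
    · rw [if_pos h, hRG (k - j) (by omega), if_neg (by omega)]
    · rw [if_neg (by omega)]
  -- q nonzero
  have hqne : q ≠ 0 := fun h => by simp [h] at hqj
  -- evaluation of p
  have hpe : ∀ t : ℝ, p.eval t = q.eval (b - t) := by
    intro t; rw [hp, Polynomial.eval_comp]; simp
  have hpne : p ≠ 0 := by
    intro h
    apply hqne
    apply Polynomial.funext
    intro u
    have := hpe (b - u)
    rw [h] at this
    simpa using this.symm
  -- nonnegativity of p on Icc a b
  have hRe : ∀ u : ℝ, 0 ≤ u → 0 ≤ R.eval u := by
    intro u hu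
    rw [Polynomial.eval_eq_sum_range]
    exact Finset.sum_nonneg fun i _ => mul_nonneg (hRpos i) (pow_nonneg hu i)
  have hGe : ∀ u : ℝ, u ≤ b - a → 0 ≤ G.eval u := by
    intro u hu
    rw [hG, Polynomial.eval_mul, Polynomial.eval_pow, Polynomial.eval_sub, Polynomial.eval_C,
      Polynomial.eval_X, hPi, Polynomial.eval_prod]
    refine mul_nonneg (pow_nonneg (by linarith) r) (Finset.prod_nonneg fun i _ => ?_)
    rw [Polynomial.eval_pow]
    exact sq_nonneg _
  have hpnn : ∀ t ∈ Set.Icc a b, 0 ≤ p.eval t := by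
    intro t ht
    rw [hpe, hq, Polynomial.eval_mul, Polynomial.eval_mul, Polynomial.eval_pow,
      Polynomial.eval_X]
    exact mul_nonneg (pow_nonneg (by linarith [ht.2]) j)
      (mul_nonneg (hRe _ (by linarith [ht.2])) (hGe _ (by linarith [ht.1])))
  -- interior nodes are roots
  have hproot : ∀ i < n, p.eval (τ i) = 0 := by
    intro i hi
    rw [hpe, hq, Polynomial.eval_mul, hG, Polynomial.eval_mul, hPi, Polynomial.eval_mul,
      Polynomial.eval_prod]
    have : ((C (b - τ i) - X) ^ 2).eval (b - τ i) = 0 := by simp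
    rw [Finset.prod_eq_zero (Finset.mem_range.2 hi) this]
    ring
  -- derivatives of p at b
  have hpb : ∀ k, (Polynomial.derivative^[k] p).eval b
      = (-1 : ℝ) ^ k * (k.factorial : ℝ) * q.coeff k := by
    intro k
    rw [hp, iter_deriv_reflect, Polynomial.eval_mul, Polynomial.eval_C, Polynomial.eval_comp]
    have : (C b - X).eval b = 0 := by simp
    rw [this, eval_zero_iter_deriv]
    ring
  -- derivatives of p at a vanish below order r
  have hpa : ∀ k < r, (Polynomial.derivative^[k] p).eval a = 0 := by
    intro k hk
    have hfac : p = (C a - X) ^ r * (C ((-1 : ℝ) ^ r) * ((X ^ j * (R * Pi)).comp (C b - X))) := by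
      rw [hp, hq, hG]
      rw [show X ^ j * (R * ((C (b - a) - X) ^ r * Pi))
          = (C (b - a) - X) ^ r * (X ^ j * (R * Pi)) from by ring]
      rw [Polynomial.mul_comp, Polynomial.pow_comp, Polynomial.sub_comp, Polynomial.C_comp,
        Polynomial.X_comp]
      have h1 : C (b - a) - (C b - X) = -(C a - X) := by
        rw [Polynomial.C_sub]; ring
      rw [h1, neg_pow]
      have h2 : ((-1 : Polynomial ℝ)) ^ r = C ((-1 : ℝ) ^ r) := by
        rw [← Polynomial.C_1, ← Polynomial.C_neg, ← Polynomial.C_pow]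
      rw [h2]; ring
    rw [hfac]
    exact eval_iter_deriv_root a r k _ hk
  -- degree bound
  have hdeg : p.natDegree + 1 ≤ 2 * n + r + s := by
    have h1 : (C (b - a) - X : Polynomial ℝ).natDegree ≤ 1 :=
      le_trans (Polynomial.natDegree_sub_le _ _) (by simp)
    have h2 : ∀ c : ℝ, (C c - X : Polynomial ℝ).natDegree ≤ 1 := fun c =>
      le_trans (Polynomial.natDegree_sub_le _ _) (by simp)
    have hPideg : Pi.natDegree ≤ 2 * n := by
      refine le_trans (Polynomial.natDegree_prod_le _ _) ?_
      refine le_trans (Finset.sum_le_sum (g := fun _ => 2) fun i _ => ?_) (by simp [mul_comm])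
      exact le_trans (Polynomial.natDegree_pow_le) (by nlinarith [h2 (b - τ i)])
    have hGdeg : G.natDegree ≤ r + 2 * n := by
      refine le_trans (Polynomial.natDegree_mul_le) ?_
      have : ((C (b - a) - X : Polynomial ℝ) ^ r).natDegree ≤ r :=
        le_trans (Polynomial.natDegree_pow_le) (by nlinarith)
      omega
    have hqdeg : q.natDegree ≤ j + (m + (r + 2 * n)) := by
      refine le_trans (Polynomial.natDegree_mul_le) ?_
      have := Polynomial.natDegree_mul_le (p := R) (q := G)
      simp only [Polynomial.natDegree_X_pow]
      omega
    have hpdeg : p.natDegree ≤ q.natDegree := by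
      refine le_trans (Polynomial.natDegree_comp_le) ?_
      nlinarith [h2 b, q.natDegree.zero_le]
    omega
  -- the support point
  have hfin : {x : ℝ | p.IsRoot x}.Finite := Polynomial.finite_setOf_isRoot hpne
  obtain ⟨x0, hx0S, hx0r⟩ := ((hinf.diff hfin).nonempty)
  have hx0I : x0 ∈ Set.Ioo a b := hx0S.1
  have hx0pos : 0 < p.eval x0 :=
    lt_of_le_of_ne (hpnn x0 (Set.Ioo_subset_Icc_self hx0I)) (fun h => hx0r h.symm)
  -- find a ball inside the support
  have hopen : IsOpen ({y : ℝ | 0 < p.eval y} ∩ Set.Ioo a b) :=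
    ((isOpen_lt continuous_const (Polynomial.continuous p))).inter isOpen_Ioo
  obtain ⟨ε, hε, hball⟩ := Metric.isOpen_iff.1 hopen x0 ⟨hx0pos, hx0I⟩
  rw [Real.ball_eq_Ioo] at hball
  have hμball : 0 < μ (Set.Ioo (x0 - ε) (x0 + ε)) := hx0S.2 ε hε
  -- integrability and positivity of the integral
  have hae : ∀ᵐ x ∂μ, x ∈ Set.Icc a b := by
    rw [MeasureTheory.ae_iff]
    exact hsupp
  have hres : μ.restrict (Set.Icc a b) = μ := Measure.restrict_eq_self_of_ae_mem hae
  have hnn : 0 ≤ᵐ[μ.restrict (Set.Icc a b)] fun t => p.eval t :=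
    Filter.Eventually.mono (ae_restrict_mem measurableSet_Icc) fun y hy => hpnn y hy
  have hintOn : IntegrableOn (fun t => p.eval t) (Set.Icc a b) μ :=
    (Polynomial.continuous p).continuousOn.integrableOn_compact isCompact_Icc
  have hint : 0 < ∫ t in Set.Icc a b, p.eval t ∂μ := by
    rw [setIntegral_pos_iff_support_of_nonneg_ae hnn hintOn]
    refine lt_of_lt_of_le hμball (measure_mono ?_)
    intro y hy
    obtain ⟨h1, h2⟩ := hball hy
    exact ⟨ne_of_gt h1, Set.Ioo_subset_Icc_self h2⟩
  have hIeq : ∫ t, p.eval t ∂μ = ∫ t in Set.Icc a b, p.eval t ∂μ := by rw [hres]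
  -- evaluate the quadrature rule on p
  have hquad := hex p hdeg
  have hQ : quad a b n r s τ w0 wi w1 (fun t => p.eval t) = w1 j * (j.factorial : ℝ) := by
    unfold quad
    have hs1 : (∑ k ∈ Finset.range r, w0 k *
        iteratedDerivWithin k (fun t => p.eval t) (Set.Icc a b) a) = 0 := by
      refine Finset.sum_eq_zero fun k hk => ?_
      rw [iterDW hab p k a (Set.left_mem_Icc.2 (le_of_lt hab)),
        hpa k (Finset.mem_range.1 hk), mul_zero]
    have hs2 : (∑ i ∈ Finset.range n, wi i * p.eval (τ i)) = 0 := by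
      refine Finset.sum_eq_zero fun i hi => ?_
      rw [hproot i (Finset.mem_range.1 hi), mul_zero]
    have hs3 : (∑ k ∈ Finset.range s, (-1 : ℝ) ^ k * w1 k *
        iteratedDerivWithin k (fun t => p.eval t) (Set.Icc a b) b)
        = w1 j * (j.factorial : ℝ) := by
      rw [Finset.sum_eq_single j]
      · rw [iterDW hab p j b (Set.right_mem_Icc.2 (le_of_lt hab)), hpb j, hqj]
        have : ((-1 : ℝ) ^ j) * ((-1 : ℝ) ^ j) = 1 := by
          rw [← pow_add, Even.neg_one_pow ⟨j, by ring⟩]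
        linear_combination w1 j * (j.factorial : ℝ) * this
      · intro k hk hkj
        rw [iterDW hab p k b (Set.right_mem_Icc.2 (le_of_lt hab)), hpb k,
          hqk k (Finset.mem_range.1 hk) hkj]
        ring
      · intro hjs
        exact absurd (Finset.mem_range.2 (by omega)) hjs
    rw [hs1, hs2, hs3]
    ring
  rw [hQ, hIeq] at hquad
  have hfacpos : (0 : ℝ) < (j.factorial : ℝ) := by positivity
  nlinarith [hint, hfacpos]
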